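/- Let p ∈ (0,1/2) and define the region A = { (a,b) ∈ ℝ≥0 × ℝ≥0 : ∃ α ∈ [0,1/2], a ≤ h_b(α) and b ≤ 1 − h_b(α + p − 2αp) }. Then every (a,b) ∈ A satisfies a + b ≤ 1, and if b > 0 then a + b < 1. -/
import Mathlib


open Real Set

noncomputable section

/-- The binary entropy function (base-2 logarithm), with the conventions
`hb 0 = hb 1 = 0` (automatic since `logb 2 0 = 0`). -/
def hb (x : ℝ) : ℝ := -(x * Real.logb 2 x) - (1 - x) * Real.logb 2 (1 - x)

lemma hb_eq (x : ℝ) : hb x = Real.binEntropy x / Real.log 2 := by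
  simp only [hb, Real.binEntropy, Real.logb, Real.log_inv]
  ring

lemma hb_half : hb (1/2) = 1 := by
  rw [hb_eq]
  rw [show (1:ℝ)/2 = 2⁻¹ by norm_num, Real.binEntropy_two_inv]
  exact div_self (ne_of_gt (Real.log_pos (by norm_num : (1:ℝ) < 2)))

/-- For the region `A = {(a,b) ≥ 0 : ∃ α ∈ [0,1/2], a ≤ h_b(α),
b ≤ 1 − h_b(α + p − 2αp)}` with `p ∈ (0,1/2)`: every `(a,b) ∈ A` satisfies
`a + b ≤ 1`, and if `b > 0` then `a + b < 1`. -/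
theorem stmt8 (p : ℝ) (hp : p ∈ Set.Ioo (0:ℝ) (1/2)) (a b : ℝ)
    (ha : 0 ≤ a) (hbnn : 0 ≤ b)
    (hmem : ∃ α ∈ Set.Icc (0:ℝ) (1/2), a ≤ hb α ∧ b ≤ 1 - hb (α + p - 2*α*p)) :
    a + b ≤ 1 ∧ (0 < b → a + b < 1) := by
  obtain ⟨α, ⟨hα0, hα2⟩, haα, hbβ⟩ := hmem
  obtain ⟨hp0, hp2⟩ := hp
  set β := α + p - 2*α*p with hβdef
  have hlog2 : (0:ℝ) < Real.log 2 := Real.log_pos (by norm_num)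
  have hαβ : α ≤ β := by nlinarith
  have hβ2 : β ≤ 1/2 := by nlinarith
  have hmemα : α ∈ Set.Icc (0:ℝ) 2⁻¹ := ⟨hα0, by linarith [hα2]⟩
  have hmemβ : β ∈ Set.Icc (0:ℝ) 2⁻¹ := ⟨by linarith, by linarith [hβ2]⟩
  have hmono : hb α ≤ hb β := by
    rw [hb_eq, hb_eq]
    have := Real.binEntropy_strictMonoOn.monotoneOn hmemα hmemβ hαβ
    gcongr
  constructor
  · linarith
  · intro hbpos
    have hβlt : β < 1/2 := by
      rcases lt_or_eq_of_le hβ2 with h | h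
      · exact h
      · exfalso
        rw [h, hb_half] at hbβ
        linarith
    have hαhalf : α < 1/2 := by nlinarith
    have hαβs : α < β := by nlinarith
    have hstrict : hb α < hb β := by
      rw [hb_eq, hb_eq]
      exact div_lt_div_of_pos_right
        (Real.binEntropy_strictMonoOn hmemα hmemβ hαβs) hlog2
    linarith
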